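/- A unital C*-algebra A has a character if and only if it has (N,ε)-characters for every integer N ≥ 2 and every ε > 0. -/

import Mathlib

open scoped ComplexOrder

variable {A : Type*} [CStarAlgebra A]

/-- A state on a unital C*-algebra: a positive linear functional of norm one. -/
def IsState (φ : A →L[ℂ] ℂ) : Prop :=
  ‖φ‖ = 1 ∧ ∀ a : A, 0 ≤ φ (star a * a)

/-- `A` has `(N,ε)`-characters if for every `N`-tuple of unitaries `u 1, …, u N` in `A`
there is a state `ρ` with `|ρ(u j)| ≥ 1 - ε` for all `j`. -/
def HasNEpsilonCharacters (A : Type*) [CStarAlgebra A] (N : ℕ) (ε : ℝ) : Prop :=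
  ∀ u : Fin N → A, (∀ j, u j ∈ unitary A) →
    ∃ φ : A →L[ℂ] ℂ, IsState φ ∧ ∀ j, 1 - ε ≤ ‖φ (u j)‖

namespace ApproxCharAux


variable {A : Type*} [CStarAlgebra A]

section Positive
variable {φ : A →L[ℂ] ℂ} (hpos : ∀ a : A, 0 ≤ φ (star a * a))

include hpos

lemma im_eq (a : A) : (φ (star a * a)).im = 0 := by
  have h := hpos a
  rw [Complex.le_def] at h
  simpa using h.2.symm

lemma re_nonneg' (a : A) : 0 ≤ (φ (star a * a)).re := by
  have h := hpos a
  rw [Complex.le_def] at h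
  simpa using h.1

lemma conj_symm (x y : A) : (starRingEnd ℂ) (φ (star y * x)) = φ (star x * y) := by
  have e1 : φ (star (x + y) * (x + y))
      = φ (star x * x) + φ (star x * y) + φ (star y * x) + φ (star y * y) := by
    simp only [star_add, add_mul, mul_add, map_add]
    ring
  have e2 : φ (star (x + Complex.I • y) * (x + Complex.I • y))
      = φ (star x * x) + Complex.I * φ (star x * y) - Complex.I * φ (star y * x)
        + φ (star y * y) := by
    simp only [star_add, star_smul, Complex.star_def, Complex.conj_I, neg_smul, add_mul, mul_add,
      neg_mul, neg_smul, smul_mul_assoc, mul_smul_comm, map_add, map_neg, map_smul, smul_smul,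
      smul_eq_mul, Complex.I_mul_I, map_smulₛₗ]
    ring_nf
    rw [Complex.I_sq]
    ring
  have h1 := im_eq hpos (x + y)
  rw [e1] at h1
  have h2 := im_eq hpos (x + Complex.I • y)
  rw [e2] at h2
  simp only [Complex.add_im, Complex.sub_im, Complex.mul_im, Complex.I_re, Complex.I_im,
    im_eq hpos x, im_eq hpos y, zero_mul, one_mul, zero_add, add_zero] at h1 h2
  apply Complex.ext <;>
    simp only [Complex.conj_re, Complex.conj_im] <;> linarith

lemma star_apply (x : A) : φ (star x) = (starRingEnd ℂ) (φ x) := by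
  have h := conj_symm hpos x 1
  simpa using h.symm

omit hpos in
/-- The positive sesquilinear form associated to a positive functional. -/
noncomputable def core (hpos : ∀ a : A, 0 ≤ φ (star a * a)) : PreInnerProductSpace.Core ℂ A where
  inner x y := φ (star x * y)
  conj_inner_symm x y := conj_symm hpos x y
  re_inner_nonneg x := by simpa using re_nonneg' hpos x
  add_left x y z := by simp only [star_add, add_mul, map_add]
  smul_left x y r := by
    simp only [star_smul, smul_mul_assoc, map_smul, Complex.star_def, smul_eq_mul, RCLike.star_def]

lemma cs (x y : A) :
    ‖φ (star x * y)‖ ^ 2 ≤ (φ (star x * x)).re * (φ (star y * y)).re := by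
  have h := @InnerProductSpace.Core.inner_mul_inner_self_le ℂ A _ _ _ (core hpos) x y
  have h2 : ‖φ (star y * x)‖ = ‖φ (star x * y)‖ := by
    rw [← conj_symm hpos x y, RCLike.norm_conj]
  calc ‖φ (star x * y)‖ ^ 2 = ‖φ (star x * y)‖ * ‖φ (star y * x)‖ := by rw [h2, sq]
  _ ≤ (φ (star x * x)).re * (φ (star y * y)).re := h

lemma phi_one_eq_one (hnorm : ‖φ‖ = 1) : φ 1 = 1 := by
  have hnt : Nontrivial A := by
    by_contra hn
    rw [not_nontrivial_iff_subsingleton] at hn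
    have : φ = 0 := by ext a; rw [Subsingleton.elim a 0]; simp
    rw [this] at hnorm; simp at hnorm
  have him : (φ 1).im = 0 := by simpa using im_eq hpos 1
  have h0 : 0 ≤ (φ 1).re := by simpa using re_nonneg' hpos 1
  have hle : (φ 1).re ≤ 1 := by
    calc (φ 1).re ≤ ‖φ 1‖ := Complex.re_le_norm _
    _ ≤ ‖φ‖ * ‖(1 : A)‖ := φ.le_opNorm 1
    _ = 1 := by rw [hnorm, norm_one, mul_one]
  have hge : 1 ≤ (φ 1).re := by
    by_contra hlt
    push_neg at hlt
    obtain ⟨r, hr1, hr2⟩ := exists_between (show Real.sqrt ((φ 1).re) < 1 by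
      rw [show (1:ℝ) = Real.sqrt 1 by simp]
      exact Real.sqrt_lt_sqrt h0 hlt)
    obtain ⟨x, hx1, hxr⟩ := φ.exists_lt_apply_of_lt_opNorm (by rw [hnorm]; exact hr2)
    have hr0 : 0 ≤ r := le_trans (Real.sqrt_nonneg _) hr1.le
    have key : ‖φ x‖ ^ 2 ≤ (φ 1).re * (φ (star x * x)).re := by
      have := cs hpos 1 x
      simpa using this
    have hxx : (φ (star x * x)).re ≤ 1 := by
      calc (φ (star x * x)).re ≤ ‖φ (star x * x)‖ := Complex.re_le_norm _
      _ ≤ ‖φ‖ * ‖star x * x‖ := φ.le_opNorm _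
      _ = ‖x‖ * ‖x‖ := by rw [hnorm, one_mul, CStarRing.norm_star_mul_self]
      _ ≤ 1 := by nlinarith [norm_nonneg x]
    have h1 : r ^ 2 < ‖φ x‖ ^ 2 := by nlinarith [norm_nonneg (φ x)]
    have h2 : (φ 1).re < r ^ 2 := by
      have := Real.sq_sqrt h0
      nlinarith [Real.sqrt_nonneg ((φ 1).re)]
    nlinarith [re_nonneg' hpos x]
  apply Complex.ext <;> simp [him]
  linarith

lemma mul_unitary (hnorm : ‖φ‖ = 1) {u : A} (hu : u ∈ unitary A) (hnu : ‖φ u‖ = 1)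
    (a : A) : φ (a * u) = φ a * φ u := by
  set c := φ u with hc
  have hsuu : star u * u = 1 := Unitary.mem_iff.mp hu |>.1
  have hφ1 : φ 1 = 1 := phi_one_eq_one hpos hnorm
  have hstar : φ (star u) = (starRingEnd ℂ) c := star_apply hpos u
  have hcc : c * (starRingEnd ℂ) c = 1 := by
    rw [Complex.mul_conj]
    norm_cast
    rw [Complex.normSq_eq_norm_sq, hnu, one_pow]
  have key : φ (star (u - c • 1) * (u - c • 1)) = 0 := by
    have expand : star (u - c • 1) * (u - c • 1)
        = star u * u - c • star u - (starRingEnd ℂ) c • u + ((c * (starRingEnd ℂ) c) • 1) := by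
      simp only [star_sub, star_smul, star_one, Complex.star_def, sub_mul, mul_sub, smul_sub,
        sub_smul, smul_mul_assoc, mul_smul_comm, mul_one, one_mul, smul_smul]
      abel
    rw [expand, hsuu]
    simp only [map_add, map_sub, map_smul, hφ1, hstar, smul_eq_mul, mul_one]
    linear_combination -hcc
  have hzero : φ (star (star a) * (u - c • 1)) = 0 := by
    have h := cs hpos (star a) (u - c • 1)
    rw [key] at h
    simp only [Complex.zero_re, mul_zero] at h
    have := sq_nonneg ‖φ (star (star a) * (u - c • 1))‖
    have hn : ‖φ (star (star a) * (u - c • 1))‖ = 0 := by nlinarith [norm_nonneg (φ (star (star a) * (u - c • 1)))]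
    simpa using hn
  rw [star_star] at hzero
  have : φ (a * u) - c * φ a = 0 := by
    have e : a * (u - c • 1) = a * u - c • a := by
      simp [mul_sub, mul_smul_comm]
    rw [e, map_sub, map_smul, smul_eq_mul] at hzero
    exact hzero
  rw [sub_eq_zero] at this
  rw [this]; ring

end Positive

section Span

lemma mem_span_unitary_of_sa_norm_le {h : A} (hh : IsSelfAdjoint h) (hn : ‖h‖ ≤ 1) :
    h ∈ Submodule.span ℂ (unitary A : Set A) := by
  rcases subsingleton_or_nontrivial A with hs | hnt
  · rw [Subsingleton.elim h 0]; exact Submodule.zero_mem _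
  have hsn : IsStarNormal h := hh.isStarNormal
  set f : ℂ → ℂ := fun z => z + Complex.I * ((Real.sqrt (1 - z.re ^ 2) : ℝ) : ℂ) with hf
  have hcont : Continuous f := by
    apply continuous_id.add
    exact continuous_const.mul (Complex.continuous_ofReal.comp
      (Real.continuous_sqrt.comp (continuous_const.sub ((continuous_pow 2).comp Complex.continuous_re))))
  have hspec : ∀ x ∈ spectrum ℂ h, x.im = 0 ∧ x.re ^ 2 ≤ 1 := by
    intro x hx
    refine ⟨hh.im_eq_zero_of_mem_spectrum hx, ?_⟩
    have h1 : ‖x‖ ≤ ‖h‖ := spectrum.norm_le_norm_of_mem hx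
    have h2 : |x.re| ≤ ‖x‖ := Complex.abs_re_le_norm x
    nlinarith [abs_nonneg x.re, sq_abs x.re]
  have hu : cfc f h ∈ unitary A := by
    refine (cfc_unitary_iff f h hsn (hcont.continuousOn)).mpr fun x hx => ?_
    obtain ⟨him, hre⟩ := hspec x hx
    set t := Real.sqrt (1 - x.re ^ 2) with ht
    have ht2 : t ^ 2 = 1 - x.re ^ 2 := Real.sq_sqrt (by linarith)
    apply Complex.ext <;>
      simp only [hf, RCLike.star_def, Complex.mul_re, Complex.mul_im, Complex.conj_re,
        Complex.conj_im, Complex.add_re, Complex.add_im, Complex.I_re, Complex.I_im,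
        Complex.ofReal_re, Complex.ofReal_im, Complex.one_re, Complex.one_im, him] <;>
      nlinarith [ht2]
  have hsum : cfc f h + star (cfc f h) = (2 : ℂ) • h := by
    rw [← cfc_star f h, ← cfc_add (a := h) f (fun z => star (f z)) hcont.continuousOn
      hcont.star.continuousOn]
    have : cfc (fun z => f z + star (f z)) h = cfc (fun z : ℂ => 2 * z) h := by
      apply cfc_congr
      intro x hx
      obtain ⟨him, _⟩ := hspec x hx
      apply Complex.ext <;>
        simp [hf, him] <;> ring
    rw [this, cfc_const_mul_id (2 : ℂ) h hsn]
  have hmem : cfc f h ∈ Submodule.span ℂ (unitary A : Set A) :=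
    Submodule.subset_span hu
  have hmem' : star (cfc f h) ∈ Submodule.span ℂ (unitary A : Set A) :=
    Submodule.subset_span (Unitary.star_mem hu)
  have : h = (2⁻¹ : ℂ) • (cfc f h + star (cfc f h)) := by
    rw [hsum, smul_smul]; norm_num
  rw [this]
  exact Submodule.smul_mem _ _ (Submodule.add_mem _ hmem hmem')

lemma mem_span_unitary_of_sa {h : A} (hh : IsSelfAdjoint h) :
    h ∈ Submodule.span ℂ (unitary A : Set A) := by
  rcases eq_or_ne h 0 with rfl | hne
  · exact Submodule.zero_mem _
  · have hpos : (0:ℝ) < ‖h‖ := norm_pos_iff.mpr hne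
    have : h = ((‖h‖ : ℂ)) • (((‖h‖⁻¹ : ℝ) : ℂ) • h) := by
      rw [smul_smul, ← Complex.ofReal_mul, mul_inv_cancel₀ hpos.ne', Complex.ofReal_one, one_smul]
    rw [this]
    apply Submodule.smul_mem
    apply mem_span_unitary_of_sa_norm_le
    · exact IsSelfAdjoint.smul (by
        rw [isSelfAdjoint_iff]; exact Complex.conj_ofReal _) hh
    · rw [norm_smul]
      simp [abs_of_nonneg (inv_nonneg.mpr hpos.le), inv_mul_cancel₀ hpos.ne']

lemma span_unitary : Submodule.span ℂ (unitary A : Set A) = ⊤ := by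
  rw [Submodule.eq_top_iff']
  intro a
  have hscal : Complex.I * (-(Complex.I/2)) = 2⁻¹ := by
    ring_nf
    rw [Complex.I_sq]
    norm_num
  have ha : a = ((2⁻¹ : ℂ) • (a + star a)) + Complex.I • ((-(Complex.I/2)) • (a - star a)) := by
    rw [smul_smul, hscal]
    module
  have hsa1 : IsSelfAdjoint ((2⁻¹ : ℂ) • (a + star a)) := by
    rw [IsSelfAdjoint, star_smul, star_add, star_star]
    have : star (2⁻¹ : ℂ) = 2⁻¹ := by simp
    rw [this, add_comm]
  have hsa2 : IsSelfAdjoint ((-(Complex.I/2) : ℂ) • (a - star a)) := by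
    rw [IsSelfAdjoint, star_smul, star_sub, star_star]
    have : star (-(Complex.I/2) : ℂ) = Complex.I/2 := by
      simp [Complex.star_def, map_div₀, Complex.conj_I]
      ring
    rw [this]
    module
  rw [ha]
  exact Submodule.add_mem _ (mem_span_unitary_of_sa hsa1)
    (Submodule.smul_mem _ _ (mem_span_unitary_of_sa hsa2))

end Span


end ApproxCharAux

/-- a unital C*-algebra has a character (a multiplicative state) if and
only if it has `(N,ε)`-characters for every integer `N ≥ 2` and every `ε > 0`. -/
theorem character_iff_approx_characters (A : Type*) [CStarAlgebra A] :
    (∃ φ : A →L[ℂ] ℂ, IsState φ ∧ ∀ a b : A, φ (a * b) = φ a * φ b) ↔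
      ∀ N : ℕ, 2 ≤ N → ∀ ε : ℝ, 0 < ε → HasNEpsilonCharacters A N ε := by
  constructor
  · rintro ⟨φ, ⟨hnorm, hpos⟩, hmul⟩ N _ ε hε u hu
    haveI : Nontrivial A := by
      by_contra hn
      rw [not_nontrivial_iff_subsingleton] at hn
      have hz : φ = 0 := by ext a; rw [Subsingleton.elim a (0 : A)]; simp
      rw [hz] at hnorm; simp at hnorm
    have hφ1 : φ 1 = 1 := ApproxCharAux.phi_one_eq_one hpos hnorm
    refine ⟨φ, ⟨hnorm, hpos⟩, fun j => ?_⟩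
    set v := u j with hv
    have hvu : v ∈ unitary A := hu j
    have hprod : φ v * φ (star v) = 1 := by
      rw [← hmul, (Unitary.mem_iff.mp hvu).2, hφ1]
    have hle : ‖φ (star v)‖ ≤ 1 := by
      calc ‖φ (star v)‖ ≤ ‖φ‖ * ‖star v‖ := φ.le_opNorm _
      _ = 1 := by rw [hnorm, norm_star, CStarRing.norm_of_mem_unitary hvu, one_mul]
    have h1 : (1:ℝ) = ‖φ v‖ * ‖φ (star v)‖ := by rw [← norm_mul, hprod, norm_one]
    have : 1 ≤ ‖φ v‖ := by nlinarith [norm_nonneg (φ v), norm_nonneg (φ (star v))]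
    linarith
  · intro h
    classical
    obtain ⟨φ0, ⟨hn0, _⟩, _⟩ := h 2 le_rfl 1 one_pos (fun _ => 1) (fun _ => one_mem _)
    haveI : Nontrivial A := by
      by_contra hn
      rw [not_nontrivial_iff_subsingleton] at hn
      have hz : φ0 = 0 := by ext a; rw [Subsingleton.elim a (0 : A)]; simp
      rw [hz] at hn0; simp at hn0
    -- the compact sets
    set Z : ({s : Finset A // ↑s ⊆ (unitary A : Set A)} × ℕ) → Set (WeakDual ℂ A) :=
      fun i => {ψ | (∀ a : A, ‖ψ a‖ ≤ ‖a‖) ∧ ψ 1 = 1 ∧ (∀ a : A, 0 ≤ ψ (star a * a)) ∧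
        ∀ v ∈ i.1.1, 1 - ((i.2 : ℝ) + 1)⁻¹ ≤ ‖ψ v‖} with hZ
    haveI : Nonempty ({s : Finset A // ↑s ⊆ (unitary A : Set A)} × ℕ) :=
      ⟨⟨⟨∅, by simp⟩, 0⟩⟩
    have hdir : Directed (· ⊇ ·) Z := by
      rintro ⟨⟨s, hs⟩, n⟩ ⟨⟨t, ht⟩, m⟩
      refine ⟨⟨⟨s ∪ t, by rw [Finset.coe_union]; exact Set.union_subset hs ht⟩, max n m⟩, ?_, ?_⟩ <;>
      · rintro ψ ⟨p1, p2, p3, p4⟩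
        refine ⟨p1, p2, p3, fun v hv => le_trans ?_ (p4 v (by simp [hv]))⟩
        have : ((max n m : ℕ) : ℝ) + 1 ≥ (n : ℝ) + 1 ∧ ((max n m : ℕ) : ℝ) + 1 ≥ (m : ℝ) + 1 := by
          constructor <;> simp [Nat.cast_le]
        have h2 := inv_anti₀ (by positivity : (0:ℝ) < (n:ℝ) + 1) this.1
        have h3 := inv_anti₀ (by positivity : (0:ℝ) < (m:ℝ) + 1) this.2
        first
          | linarith
          | linarith
    have hne : ∀ i, (Z i).Nonempty := by
      rintro ⟨⟨s, hs⟩, n⟩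
      set L : List A := s.toList ++ [1, 1] with hL
      have hlen : 2 ≤ L.length := by simp [hL]
      have hmem : ∀ j : Fin L.length, L.get j ∈ unitary A := by
        intro j
        have hjm : L.get j ∈ L := L.get_mem _
        rcases List.mem_append.mp hjm with h1 | h2
        · exact hs (by simpa using h1)
        · have h3 : L.get j = 1 := by
            rcases List.mem_cons.mp h2 with h4 | h4
            · exact h4
            · simpa using h4
          rw [h3]; exact one_mem _
      obtain ⟨φ, ⟨hnorm, hpos⟩, hb⟩ :=
        h L.length hlen (((n : ℝ) + 1)⁻¹) (by positivity) (fun j => L.get j) hmem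
      refine ⟨φ, fun a => ?_, ApproxCharAux.phi_one_eq_one hpos hnorm, hpos, fun v hv => ?_⟩
      · calc ‖φ a‖ ≤ ‖φ‖ * ‖a‖ := φ.le_opNorm a
        _ = ‖a‖ := by rw [hnorm, one_mul]
      · have hv' : v ∈ L := List.mem_append.mpr (Or.inl (Finset.mem_toList.mpr hv))
        obtain ⟨j, hj⟩ := List.mem_iff_get.mp hv'
        have := hb j
        rw [hj] at this
        exact this
    have hclosed : ∀ i, IsClosed (Z i) := by
      intro i
      have h1 : IsClosed {ψ : WeakDual ℂ A | ∀ a : A, ‖ψ a‖ ≤ ‖a‖} := by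
        rw [Set.setOf_forall]
        exact isClosed_iInter fun a =>
          isClosed_le ((WeakDual.eval_continuous a).norm) continuous_const
      have h2 : IsClosed {ψ : WeakDual ℂ A | ψ 1 = 1} :=
        isClosed_eq (WeakDual.eval_continuous 1) continuous_const
      have hC : IsClosed {z : ℂ | 0 ≤ z} := by
        have : {z : ℂ | 0 ≤ z} = {z : ℂ | 0 ≤ z.re} ∩ {z : ℂ | z.im = 0} := by
          ext z
          simp only [Set.mem_setOf_eq, Set.mem_inter_iff, Complex.le_def, Complex.zero_re,
            Complex.zero_im]
          tauto
        rw [this]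
        exact (isClosed_le continuous_const Complex.continuous_re).inter
          (isClosed_eq Complex.continuous_im continuous_const)
      have h3 : IsClosed {ψ : WeakDual ℂ A | ∀ a : A, 0 ≤ ψ (star a * a)} := by
        rw [Set.setOf_forall]
        exact isClosed_iInter fun a => hC.preimage (WeakDual.eval_continuous _)
      have h4 : IsClosed {ψ : WeakDual ℂ A | ∀ v ∈ i.1.1, 1 - ((i.2 : ℝ) + 1)⁻¹ ≤ ‖ψ v‖} := by
        rw [Set.setOf_forall]
        refine isClosed_iInter fun v => ?_
        rw [Set.setOf_forall]
        exact isClosed_iInter fun _ =>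
          isClosed_le continuous_const ((WeakDual.eval_continuous v).norm)
      exact h1.inter (h2.inter (h3.inter h4))
    have hcpt : ∀ i, IsCompact (Z i) := by
      have hpolar := WeakDual.isCompact_polar (𝕜 := ℂ) (E := A)
        (Metric.ball_mem_nhds (0 : A) one_pos)
      intro i
      refine hpolar.of_isClosed_subset (hclosed i) ?_
      rintro ψ ⟨p1, -, -, -⟩
      rw [WeakDual.polar_def]
      intro x hx
      exact le_trans (p1 x) (le_of_lt (by simpa using hx))
    obtain ⟨ρ, hρ⟩ :=
      IsCompact.nonempty_iInter_of_directed_nonempty_isCompact_isClosed Z hdir hne hcpt hclosed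
    simp only [Set.mem_iInter] at hρ
    obtain ⟨hb, h1, hpos, -⟩ := hρ ⟨⟨∅, by simp⟩, 0⟩
    have hu1 : ∀ v ∈ unitary A, ‖ρ v‖ = 1 := by
      intro v hv
      have hle : ‖ρ v‖ ≤ 1 := le_trans (hb v) (le_of_eq (CStarRing.norm_of_mem_unitary hv))
      have hge : 1 ≤ ‖ρ v‖ := by
        have key : ∀ n : ℕ, 1 - ((n : ℝ) + 1)⁻¹ ≤ ‖ρ v‖ := fun n =>
          (hρ ⟨⟨{v}, by simpa using hv⟩, n⟩).2.2.2 v (Finset.mem_singleton_self v)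
        by_contra hlt
        push_neg at hlt
        obtain ⟨n, hn⟩ := exists_nat_one_div_lt (show (0:ℝ) < 1 - ‖ρ v‖ by linarith)
        have := key n
        rw [one_div] at hn
        linarith
      linarith
    set ρ' : A →L[ℂ] ℂ := ρ with hρ'
    have hb' : ∀ a : A, ‖ρ' a‖ ≤ ‖a‖ := hb
    have hρnorm : ‖ρ'‖ = 1 := by
      apply le_antisymm
      · exact ρ'.opNorm_le_bound zero_le_one (fun a => by simpa using hb' a)
      · have := ρ'.le_opNorm 1
        rw [norm_one, mul_one] at this
        have h1' : ρ' 1 = 1 := h1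
        rw [h1', norm_one] at this
        exact this
    refine ⟨ρ', ⟨hρnorm, hpos⟩, fun a b => ?_⟩
    have hbmem : b ∈ Submodule.span ℂ (unitary A : Set A) := by
      rw [ApproxCharAux.span_unitary]; trivial
    induction hbmem using Submodule.span_induction with
    | mem v hv => exact ApproxCharAux.mul_unitary hpos hρnorm hv (hu1 v hv) a
    | zero => simp
    | add x y _ _ hx hy => rw [mul_add, map_add, map_add, hx, hy]; ring
    | smul c x _ hx => rw [mul_smul_comm, map_smul, map_smul, hx, smul_eq_mul, smul_eq_mul]; ring
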